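/- Suppose ε > 0 is small, k > 0, and let ρ(x) = ε/log²(15x/k) for x ≥ k/5 and ρ(x) = 0 otherwise. Let G be an n-vertex (ε, k)-robust-expander with k < n/10 and average degree d. Then for every W ⊆ V(G) with |W| ≤ (1/20)·ρ(n)·n, the graph G − W has average degree at least (1/20)·ρ(n)·d. -/

import Mathlib

open Finset SimpleGraph
open scoped Classical

variable {V : Type*}

/-- Number of ordered adjacent pairs inside `S` (= sum of degrees in the induced subgraph). -/
noncomputable def degSum [Fintype V] (G : SimpleGraph V) (S : Finset V) : ℕ :=
  ((S ×ˢ S).filter fun p => G.Adj p.1 p.2).card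

/-- Average degree of the subgraph of `G` induced on `S`. -/
noncomputable def avgDegOn [Fintype V] (G : SimpleGraph V) (S : Finset V) : ℝ :=
  (degSum G S : ℝ) / (S.card : ℝ)

/-- Average degree of `G`. -/
noncomputable def avgDeg [Fintype V] (G : SimpleGraph V) : ℝ :=
  avgDegOn G Finset.univ

/-- `cruxSize α G` is the minimum order of a subgraph of `G` with average degree at least
`α · d(G)` (equivalently, of a vertex set inducing such a subgraph). -/
noncomputable def cruxSize [Fintype V] (α : ℝ) (G : SimpleGraph V) : ℕ :=
  sInf {m | ∃ S : Finset V, S.card = m ∧ α * avgDeg G ≤ avgDegOn G S}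

/-- Number of edges between `S` and its complement (counted as ordered pairs from `S` out). -/
noncomputable def crossPairs [Fintype V] (G : SimpleGraph V) (S : Finset V) : ℕ :=
  ((S ×ˢ Sᶜ).filter fun p => G.Adj p.1 p.2).card

/-- External neighbourhood of `A` in the graph `G − D`. -/
noncomputable def nbhdIn [Fintype V] (G : SimpleGraph V) (D A : Finset V) : Finset V :=
  Finset.univ.filter fun v => v ∉ D ∧ v ∉ A ∧ ∃ u ∈ A, G.Adj u v

/-- Ball of radius `r` around `A` in the graph `G − D`. -/
noncomputable def ballIn [Fintype V] (G : SimpleGraph V) (D A : Finset V) : ℕ → Finset V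
  | 0 => A
  | r + 1 => ballIn G D A r ∪ nbhdIn G D (ballIn G D A r)

/-- `G` has the `(a, b, ρ)`-expansion-property. -/
def ExpansionProperty [Fintype V] (G : SimpleGraph V) (a b ρ : ℝ) : Prop :=
  ∀ X : Finset V, a ≤ (X.card : ℝ) → (X.card : ℝ) ≤ b →
    ρ * (X.card : ℝ) ≤ ((nbhdIn G ∅ X).card : ℝ)

/-- The Komlós–Szemerédi expansion rate function. -/
noncomputable def rho (ε k x : ℝ) : ℝ :=
  if k / 5 ≤ x then ε / (Real.log (15 * x / k)) ^ 2 else 0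

/-- `(ε, k)`-robust-expander. -/
def RobustExpander [Fintype V] (G : SimpleGraph V) (ε k : ℝ) : Prop :=
  ∀ X : Finset V, k / 2 ≤ (X.card : ℝ) → (X.card : ℝ) ≤ (Fintype.card V : ℝ) / 2 →
    ∀ F : Finset (Sym2 V), ↑F ⊆ G.edgeSet →
      (F.card : ℝ) ≤ avgDeg G * rho ε k (X.card : ℝ) * (X.card : ℝ) →
      rho ε k (X.card : ℝ) * (X.card : ℝ) ≤ ((nbhdIn (G.deleteEdges ↑F) ∅ X).card : ℝ)

/-- `G` contains a subdivision of the graph `H` (on vertex set `Fin t`): there are `t` distinct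
core vertices and internally vertex-disjoint paths for the edges of `H`, whose internal
vertices avoid the cores. -/
def ContainsSubdivision {t : ℕ} (H : SimpleGraph (Fin t)) (G : SimpleGraph V) : Prop :=
  ∃ c : Fin t ↪ V, ∃ p : ∀ i j : Fin t, i < j → H.Adj i j → G.Walk (c i) (c j),
    (∀ i j (h : i < j) (ha : H.Adj i j), (p i j h ha).IsPath) ∧
    (∀ i j (h : i < j) (ha : H.Adj i j) (k : Fin t),
        c k ∈ (p i j h ha).support → k = i ∨ k = j) ∧
    (∀ i j (h : i < j) (ha : H.Adj i j) i' j' (h' : i' < j') (ha' : H.Adj i' j'),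
        (i, j) ≠ (i', j') →
        Disjoint ((p i j h ha).support.toFinset \ {c i, c j})
          ((p i' j' h' ha').support.toFinset \ {c i', c j'}))

/-- `G` contains a copy of `H` as a subgraph. -/
def ContainsCopy {W₀ : Type*} (H : SimpleGraph W₀) (G : SimpleGraph V) : Prop :=
  ∃ f : W₀ → V, Function.Injective f ∧ ∀ a b, H.Adj a b → G.Adj (f a) (f b)

/-- Clique number of `G`. -/
noncomputable def cliqueNumber [Fintype V] (G : SimpleGraph V) : ℕ :=
  sSup {n | ∃ s : Finset V, G.IsNClique n s}

lemma one_lt_log_ratio {k x : ℝ} (hk : 0 < k) (hx : k / 5 ≤ x) :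
    1 < Real.log (15 * x / k) := by
  have h3 : (3:ℝ) ≤ 15 * x / k := by
    rw [le_div_iff₀ hk]; linarith
  have he : Real.exp 1 < 3 := Real.exp_one_lt_d9.trans_le (by norm_num)
  calc (1:ℝ) < Real.log 3 := (Real.lt_log_iff_exp_lt (by norm_num)).2 he
    _ ≤ _ := Real.log_le_log (by norm_num) h3

lemma rho_pos' {ε k x : ℝ} (hε : 0 < ε) (hk : 0 < k) (hx : k / 5 ≤ x) :
    0 < rho ε k x := by
  have h := one_lt_log_ratio hk hx
  unfold rho
  rw [if_pos hx]
  exact div_pos hε (by nlinarith)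

lemma rho_le_one' {ε k x : ℝ} (hε : 0 ≤ ε) (hε1 : ε ≤ 1) (hk : 0 < k) (hx : k / 5 ≤ x) :
    rho ε k x ≤ 1 := by
  have h := one_lt_log_ratio hk hx
  unfold rho
  rw [if_pos hx, div_le_one (by nlinarith)]
  nlinarith

lemma rho_anti' {ε k x y : ℝ} (hε : 0 ≤ ε) (hk : 0 < k) (hx : k / 5 ≤ x) (hxy : x ≤ y) :
    rho ε k y ≤ rho ε k x := by
  have hy : k / 5 ≤ y := hx.trans hxy
  have h1 := one_lt_log_ratio hk hx
  have h2 : Real.log (15 * x / k) ≤ Real.log (15 * y / k) := by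
    have hx0 : (0:ℝ) < 15 * x / k := div_pos (by linarith) hk
    apply Real.log_le_log hx0
    gcongr
  unfold rho
  rw [if_pos hx, if_pos hy]
  apply div_le_div_of_nonneg_left hε (by nlinarith) (by nlinarith)

set_option maxHeartbeats 1000000 in
/-- in a sufficiently large `(ε, k)`-robust-expander with `k < n/10`, removing any
`W` with `|W| ≤ (1/20)ρ(n)n` leaves a graph of average degree at least `(1/20)ρ(n)d`. -/
theorem statement_3 :
    ∀ ε : ℝ, 0 < ε → ε < 1 →
      ∃ n₀ : ℕ, ∀ (V : Type) [Fintype V], ∀ (G : SimpleGraph V) (k : ℝ), 0 < k →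
        n₀ ≤ Fintype.card V → k < (Fintype.card V : ℝ) / 10 →
        RobustExpander G ε k →
        ∀ W : Finset V,
          (W.card : ℝ) ≤ 1 / 20 * rho ε k (Fintype.card V : ℝ) * (Fintype.card V : ℝ) →
          1 / 20 * rho ε k (Fintype.card V : ℝ) * avgDeg G ≤ avgDegOn G Wᶜ := by
  intro ε hε hε1
  refine ⟨2, ?_⟩
  intro V _ G k hk hn hkn hG W hW
  set n : ℕ := Fintype.card V with hndef
  have hnR : (2:ℝ) ≤ (n:ℝ) := by exact_mod_cast hn
  have hkn5 : k / 5 ≤ (n:ℝ) := by linarith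
  have hρn_pos : 0 < rho ε k (n:ℝ) := rho_pos' hε hk hkn5
  have hρn_le : rho ε k (n:ℝ) ≤ 1 := rho_le_one' hε.le hε1.le hk hkn5
  by_cases hd : 0 < avgDeg G
  swap
  · push_neg at hd
    have h1 : 0 ≤ avgDegOn G Wᶜ := by
      unfold avgDegOn; positivity
    nlinarith [mul_nonneg hρn_pos.le (neg_nonneg.2 hd)]
  by_contra hcon
  push_neg at hcon
  -- |W| is small, in ℕ
  have hW20 : 20 * W.card ≤ n := by
    have h2 : rho ε k (n:ℝ) * (n:ℝ) ≤ 1 * (n:ℝ) :=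
      mul_le_mul_of_nonneg_right hρn_le (by positivity)
    have : (20 * W.card : ℝ) ≤ (n:ℝ) := by nlinarith
    exact_mod_cast this
  have hWc_card : Wᶜ.card = n - W.card := Finset.card_compl W
  have hhalf : n / 2 ≤ Wᶜ.card := by omega
  obtain ⟨X, hXsub, hXcard⟩ := Finset.exists_subset_card_eq hhalf
  -- real bounds on m = ⌊n/2⌋
  have hmlow : ((n:ℝ) - 1) / 2 ≤ ((n / 2 : ℕ) : ℝ) := by
    have h : n ≤ 2 * (n / 2) + 1 := by omega
    have h' : (n:ℝ) ≤ 2 * ((n / 2 : ℕ) : ℝ) + 1 := by exact_mod_cast h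
    linarith
  have hmhigh : ((n / 2 : ℕ) : ℝ) ≤ (n:ℝ) / 2 := by
    have h : 2 * (n / 2) ≤ n := by omega
    have h' : 2 * ((n / 2 : ℕ) : ℝ) ≤ (n:ℝ) := by exact_mod_cast h
    linarith
  have hkm5 : k / 5 ≤ ((n / 2 : ℕ) : ℝ) := by linarith
  have hρX : rho ε k (n:ℝ) ≤ rho ε k ((n / 2 : ℕ) : ℝ) :=
    rho_anti' hε.le hk hkm5 (by linarith)
  have hρX_pos : 0 < rho ε k ((n / 2 : ℕ) : ℝ) := lt_of_lt_of_le hρn_pos hρX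
  -- the forbidden edge set: all edges inside Wᶜ
  set F : Finset (Sym2 V) :=
    ((Wᶜ ×ˢ Wᶜ).filter fun p => G.Adj p.1 p.2).image (fun p => s(p.1, p.2)) with hF
  have hFsub : ↑F ⊆ G.edgeSet := by
    intro e he
    simp only [hF, Finset.coe_image, Set.mem_image, Finset.mem_coe, Finset.mem_filter] at he
    obtain ⟨⟨a, b⟩, ⟨-, hab⟩, rfl⟩ := he
    simpa using hab
  have hFle : (F.card : ℝ) ≤ (degSum G Wᶜ : ℝ) := by
    have := Finset.card_image_le (s := (Wᶜ ×ˢ Wᶜ).filter fun p => G.Adj p.1 p.2)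
      (f := fun p => s(p.1, p.2))
    rw [hF]
    exact_mod_cast this
  have hWcpos : (0:ℝ) < (Wᶜ.card : ℝ) := by
    have : 0 < Wᶜ.card := by omega
    exact_mod_cast this
  have hdeg : (degSum G Wᶜ : ℝ) < 1 / 20 * rho ε k (n:ℝ) * avgDeg G * (Wᶜ.card : ℝ) := by
    rw [avgDegOn, div_lt_iff₀ hWcpos] at hcon
    exact hcon
  have hWcn : ((Wᶜ.card : ℕ) : ℝ) ≤ (n:ℝ) := by
    have h : Wᶜ.card ≤ n := by omega
    exact_mod_cast h
  -- bound on |F| for the robust expansion hypothesis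
  have hprod : rho ε k (n:ℝ) * ((n:ℝ) / 20) ≤ rho ε k ((n / 2 : ℕ) : ℝ) * ((n / 2 : ℕ) : ℝ) :=
    mul_le_mul hρX (by linarith) (by positivity) hρX_pos.le
  have hFbound : (F.card : ℝ) ≤
      avgDeg G * rho ε k ((X.card : ℕ) : ℝ) * ((X.card : ℕ) : ℝ) := by
    rw [hXcard]
    have h1 : 1 / 20 * rho ε k (n:ℝ) * avgDeg G * (Wᶜ.card : ℝ)
        ≤ 1 / 20 * rho ε k (n:ℝ) * avgDeg G * (n:ℝ) := by
      apply mul_le_mul_of_nonneg_left hWcn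
      positivity
    have h2 : avgDeg G * (rho ε k (n:ℝ) * ((n:ℝ) / 20))
        ≤ avgDeg G * (rho ε k ((n / 2 : ℕ) : ℝ) * ((n / 2 : ℕ) : ℝ)) :=
      mul_le_mul_of_nonneg_left hprod hd.le
    nlinarith
  have hexp := hG X (by rw [hXcard]; linarith) (by rw [hXcard]; linarith) F hFsub hFbound
  rw [hXcard] at hexp
  -- the external neighbourhood avoids F-edges, hence lands in W
  have hNW : nbhdIn (G.deleteEdges ↑F) ∅ X ⊆ W := by
    intro v hv
    simp only [nbhdIn, Finset.mem_filter, Finset.mem_univ, true_and] at hv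
    obtain ⟨-, hvX, u, huX, hadj⟩ := hv
    rw [SimpleGraph.deleteEdges_adj] at hadj
    by_contra hvW
    apply hadj.2
    simp only [hF, Finset.coe_image, Set.mem_image, Finset.mem_coe, Finset.mem_filter,
      Finset.mem_product]
    exact ⟨(u, v), ⟨⟨hXsub huX, Finset.mem_compl.2 hvW⟩, hadj.1⟩, rfl⟩
  have hcard : ((nbhdIn (G.deleteEdges ↑F) ∅ X).card : ℝ) ≤ (W.card : ℝ) := by
    exact_mod_cast Finset.card_le_card hNW
  -- final contradiction
  have e1 : rho ε k (n:ℝ) * ((n / 2 : ℕ) : ℝ) ≤ rho ε k ((n / 2 : ℕ) : ℝ) * ((n / 2 : ℕ) : ℝ) :=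
    mul_le_mul_of_nonneg_right hρX (by positivity)
  have e2 : rho ε k (n:ℝ) * (((n:ℝ) - 1) / 2) ≤ rho ε k (n:ℝ) * ((n / 2 : ℕ) : ℝ) :=
    mul_le_mul_of_nonneg_left hmlow hρn_pos.le
  nlinarith [mul_pos hρn_pos (show (0:ℝ) < 9 * (n:ℝ) - 10 by linarith)]
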